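/- Let D be a bin-packing instance with item sizes in (0, S] sorted in nonincreasing order, and let g ≥ 1 be an integer. Partition D into consecutive groups of cardinality g (the last group possibly smaller); let U be the instance obtained by rounding each item size up to the maximum size in its group, let U' consist of the first group of U (the g largest items) and U'' of the remaining groups of U. Then OPT(U'') ≤ OPT(D) ≤ OPT(U'') + g, where OPT denotes the classical (1-times) bin-packing optimum with capacity S. -/

import Mathlib

/-- `OPT(D)` (classical bin packing = `1`-times packing, and more generally the
`k`-times optimum): the minimum number `q` of bins `B : Fin q → Finset (Fin n)`
with each bin of total size at most `S` and each item in exactly `k` bins. -/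
noncomputable def kOPTF {n : ℕ} (d : Fin n → ℝ) (S : ℝ) (k : ℕ) : ℕ :=
  sInf {q | ∃ B : Fin q → Finset (Fin n),
    (∀ j, ∑ i ∈ B j, d i ≤ S) ∧
    (∀ i, (Finset.univ.filter fun j => i ∈ B j).card = k)}

lemma trivial_mem {n : ℕ} (d : Fin n → ℝ) (S : ℝ) (hdS : ∀ i, d i ≤ S) :
    n ∈ {q | ∃ B : Fin q → Finset (Fin n),
      (∀ j, ∑ i ∈ B j, d i ≤ S) ∧
      (∀ i, (Finset.univ.filter fun j => i ∈ B j).card = 1)} := by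
  refine ⟨fun j => {⟨j.val, j.isLt⟩}, fun j => by simpa using hdS _, fun i => ?_⟩
  rw [Finset.card_eq_one]
  refine ⟨⟨i.val, i.isLt⟩, ?_⟩
  ext j
  simp [Fin.ext_iff, eq_comm]

/-- Monotonicity: if `e` injects into `d` with smaller sizes, `OPT(e) ≤ OPT(d)`. -/
lemma kOPTF_mono {n m : ℕ} (S : ℝ) (d : Fin n → ℝ) (e : Fin m → ℝ)
    (hd0 : ∀ i, 0 ≤ d i) (hdS : ∀ i, d i ≤ S)
    (f : Fin m → Fin n) (hf : Function.Injective f)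
    (hde : ∀ k, e k ≤ d (f k)) : kOPTF e S 1 ≤ kOPTF d S 1 := by
  have hne : Set.Nonempty {q | ∃ B : Fin q → Finset (Fin n),
      (∀ j, ∑ i ∈ B j, d i ≤ S) ∧
      (∀ i, (Finset.univ.filter fun j => i ∈ B j).card = 1)} :=
    ⟨n, trivial_mem d S hdS⟩
  obtain ⟨B, hB1, hB2⟩ := Nat.sInf_mem hne
  apply Nat.sInf_le
  refine ⟨fun j => Finset.univ.filter (fun k => f k ∈ B j), fun j => ?_, fun k => ?_⟩
  · calc ∑ k ∈ Finset.univ.filter (fun k => f k ∈ B j), e k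
        ≤ ∑ k ∈ Finset.univ.filter (fun k => f k ∈ B j), d (f k) :=
          Finset.sum_le_sum (fun k _ => hde k)
      _ = ∑ i ∈ (Finset.univ.filter (fun k => f k ∈ B j)).image f, d i :=
          (Finset.sum_image (fun x _ y _ h => hf h)).symm
      _ ≤ ∑ i ∈ B j, d i := by
          apply Finset.sum_le_sum_of_subset_of_nonneg
          · intro i hi
            obtain ⟨k, hk, rfl⟩ := Finset.mem_image.mp hi
            exact (Finset.mem_filter.mp hk).2
          · intro i _ _; exact hd0 i
      _ ≤ S := hB1 j
  · dsimp only [kOPTF]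
    simp only [Finset.mem_filter, Finset.mem_univ, true_and]
    exact hB2 (f k)

/-- Packing construction for the upper bound: from a `q`-bin packing of `e`
build a `(q+g)`-bin packing of `d`. -/
lemma pack_aux {n m g : ℕ} (S : ℝ) (hS : 0 < S) (d : Fin n → ℝ) (e : Fin m → ℝ)
    (hdS : ∀ i, d i ≤ S)
    (f : Fin m → Fin n) (hf : Function.Injective f)
    (hfd : ∀ k, d (f k) ≤ e k)
    (c : Fin n → ℕ)
    (hc : ∀ i, (∀ k, f k ≠ i) → c i < g)
    (hcinj : ∀ i i', (∀ k, f k ≠ i) → (∀ k, f k ≠ i') → c i = c i' → i = i')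
    (q : ℕ) (B : Fin q → Finset (Fin m))
    (hB1 : ∀ j, ∑ i ∈ B j, e i ≤ S)
    (hB2 : ∀ i, (Finset.univ.filter fun j => i ∈ B j).card = 1) :
    (q + g) ∈ {p | ∃ B : Fin p → Finset (Fin n),
      (∀ j, ∑ i ∈ B j, d i ≤ S) ∧
      (∀ i, (Finset.univ.filter fun j => i ∈ B j).card = 1)} := by
  classical
  refine ⟨fun j => if h : j.val < q then (B ⟨j.val, h⟩).image f
      else Finset.univ.filter (fun i : Fin n => (∀ k, f k ≠ i) ∧ c i = j.val - q),
    fun j => ?_, fun i => ?_⟩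
  · beta_reduce
    by_cases h : j.val < q
    · rw [dif_pos h, Finset.sum_image (fun x _ y _ h => hf h)]
      calc ∑ k ∈ B ⟨j.val, h⟩, d (f k) ≤ ∑ k ∈ B ⟨j.val, h⟩, e k :=
            Finset.sum_le_sum (fun k _ => hfd k)
        _ ≤ S := hB1 _
    · rw [dif_neg h]
      set t := Finset.univ.filter (fun i : Fin n => (∀ k, f k ≠ i) ∧ c i = j.val - q) with ht
      rcases Finset.eq_empty_or_nonempty t with h0 | ⟨a, ha⟩
      · simp [h0, hS.le]
      · have htA : t = {a} := by
          apply Finset.eq_singleton_iff_unique_mem.mpr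
          refine ⟨ha, fun b hb => ?_⟩
          rw [ht, Finset.mem_filter] at ha hb
          exact hcinj b a hb.2.1 ha.2.1 (hb.2.2.trans ha.2.2.symm)
        rw [htA, Finset.sum_singleton]
        exact hdS a
  · rw [Finset.card_eq_one]
    by_cases hi : ∃ k, f k = i
    · obtain ⟨k, rfl⟩ := hi
      obtain ⟨j', hj'⟩ := Finset.card_eq_one.mp (hB2 k)
      refine ⟨⟨j'.val, by have := j'.isLt; omega⟩, ?_⟩
      ext j
      simp only [Finset.mem_filter, Finset.mem_univ, true_and, Finset.mem_singleton]
      constructor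
      · intro hj
        by_cases h : j.val < q
        · rw [dif_pos h, Finset.mem_image] at hj
          obtain ⟨k', hk', hkk⟩ := hj
          have hk2 : k' = k := hf hkk
          subst hk2
          have hmem : (⟨j.val, h⟩ : Fin q) ∈ Finset.univ.filter (fun j => k' ∈ B j) :=
            Finset.mem_filter.mpr ⟨Finset.mem_univ _, hk'⟩
          rw [hj', Finset.mem_singleton] at hmem
          apply Fin.ext
          show j.val = j'.val
          rw [← hmem]
        · rw [dif_neg h, Finset.mem_filter] at hj
          exact absurd rfl (hj.2.1 k)
      · intro hj
        subst hj
        have h : j'.val < q := j'.isLt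
        rw [dif_pos (show ((⟨j'.val, by omega⟩ : Fin (q + g)) : ℕ) < q from h)]
        apply Finset.mem_image_of_mem
        have hmem : j' ∈ Finset.univ.filter (fun j => k ∈ B j) := by
          rw [hj']; exact Finset.mem_singleton_self _
        have := (Finset.mem_filter.mp hmem).2
        exact this
    · push_neg at hi
      have hcg := hc i hi
      refine ⟨⟨q + c i, by omega⟩, ?_⟩
      ext j
      simp only [Finset.mem_filter, Finset.mem_univ, true_and, Finset.mem_singleton]
      constructor
      · intro hj
        by_cases h : j.val < q
        · rw [dif_pos h, Finset.mem_image] at hj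
          obtain ⟨k', _, hkk⟩ := hj
          exact absurd hkk (hi k')
        · rw [dif_neg h, Finset.mem_filter] at hj
          have h2 : c i = j.val - q := hj.2.2
          apply Fin.ext
          show j.val = q + c i
          omega
      · intro hj
        subst hj
        rw [dif_neg (show ¬ ((⟨q + c i, by omega⟩ : Fin (q + g)) : ℕ) < q by
          show ¬ q + c i < q; omega)]
        refine Finset.mem_filter.mpr ⟨Finset.mem_univ _, hi, ?_⟩
        show c i = q + c i - q
        omega

/-- linear grouping lemma: Let `D = d : Fin n → ℝ` have sizes in
`(0, S]`, sorted in nonincreasing order, and let `g ≥ 1`.  Partition `D` into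
consecutive groups of cardinality `g` (the last group possibly smaller); let `U`
round each item up to the maximum of its group (which sits at index `i/g·g`), let
`U'` be the first group of `U` (the `g` largest items) and `U''` the remaining
groups of `U`.  Then `OPT(U'') ≤ OPT(D) ≤ OPT(U'') + g` for the classical
(1-times) bin-packing optimum with capacity `S`. -/
theorem stmt_15 (S : ℝ) (hS : 0 < S) (n : ℕ) (d : Fin n → ℝ)
    (hd : ∀ i, 0 < d i ∧ d i ≤ S) (hanti : Antitone d)
    (g : ℕ) (hg : 1 ≤ g)
    (U : Fin n → ℝ)
    (hU : U = fun i => d ⟨i.val / g * g,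
      Nat.lt_of_le_of_lt (Nat.div_mul_le_self _ _) i.isLt⟩)
    (U'' : Fin (n - g) → ℝ)
    (hU'' : U'' = fun j => U ⟨j.val + g, by have := j.isLt; omega⟩) :
    kOPTF U'' S 1 ≤ kOPTF d S 1 ∧ kOPTF d S 1 ≤ kOPTF U'' S 1 + g := by
  have hgpos : 0 < g := hg
  subst hU'' hU
  have hU''S : ∀ k : Fin (n - g), (fun j : Fin (n - g) =>
      d ⟨(j.val + g) / g * g, Nat.lt_of_le_of_lt (Nat.div_mul_le_self _ _)
        (by have := j.isLt; omega)⟩) k ≤ S := fun k => (hd _).2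
  constructor
  · refine kOPTF_mono S d _ (fun i => (hd i).1.le) (fun i => (hd i).2)
      (Fin.castLE (Nat.sub_le n g)) (Fin.castLE_injective _) (fun k => ?_)
    apply hanti
    rw [Fin.le_def]
    simp only [Fin.coe_castLE]
    have h1 : (k.val + g) / g = k.val / g + 1 := Nat.add_div_right _ hgpos
    have h2 := Nat.lt_div_mul_add (a := k.val) hgpos
    rw [h1, add_mul, one_mul]
    omega
  · have hne : Set.Nonempty {p | ∃ B : Fin p → Finset (Fin (n - g)),
        (∀ j, ∑ i ∈ B j, (fun j : Fin (n - g) =>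
          d ⟨(j.val + g) / g * g, Nat.lt_of_le_of_lt (Nat.div_mul_le_self _ _)
            (by have := j.isLt; omega)⟩) i ≤ S) ∧
        (∀ i, (Finset.univ.filter fun j => i ∈ B j).card = 1)} :=
      ⟨n - g, trivial_mem _ S hU''S⟩
    obtain ⟨B, hB1, hB2⟩ := Nat.sInf_mem hne
    refine Nat.sInf_le (pack_aux S hS d _ (fun i => (hd i).2)
      (fun k => ⟨k.val + g, by have := k.isLt; omega⟩)
      (fun a b hab => by rw [Fin.ext_iff] at hab ⊢; simpa using hab)
      (fun k => ?_) (fun i => i.val) (fun i hni => ?_)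
      (fun i i' _ _ h => Fin.ext h) _ B hB1 hB2)
    · apply hanti
      rw [Fin.le_def]
      exact Nat.div_mul_le_self _ _
    · by_contra hgi
      push_neg at hgi
      have hin : i.val < n := i.isLt
      exact hni ⟨i.val - g, by omega⟩ (by rw [Fin.ext_iff]; simp; omega)
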